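/- If V is a nuclear space (a complete countably-Hilbert space such that for every n there is m ≥ n with the inclusion V_m → V_n Hilbert–Schmidt), then every bounded subset of V is relatively compact (V is perfect). -/

import Mathlib

open Topology Filter Uniformity
lemma stmt19_pos {V : Type*} [AddCommGroup V] [Module ℝ V]
    (pm : Seminorm ℝ V) (B : V →ₗ[ℝ] V →ₗ[ℝ] ℝ)
    (hBs : ∀ u v, B u v = B v u)
    (hB : ∀ v, pm v = Real.sqrt (B v v))
    (w : V) (hww : B w w = 1) : ∀ v, 0 ≤ B v v := by
  intro v
  by_contra h
  push_neg at h
  have hpv : pm v = 0 := by rw [hB]; exact Real.sqrt_eq_zero'.mpr h.le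
  have hscale : ∀ t : ℝ, pm (t • v) = 0 := fun t => by
    rw [map_smul_eq_mul, hpv, mul_zero]
  have heq : ∀ t : ℝ, pm (t • v + w) = pm w := by
    intro t
    refine le_antisymm ?_ ?_
    · calc pm (t • v + w) ≤ pm (t • v) + pm w := map_add_le_add _ _ _
        _ = pm w := by rw [hscale, zero_add]
    · calc pm w = pm ((t • v + w) + (-(t • v))) := by rw [add_neg_cancel_comm]
        _ ≤ pm (t • v + w) + pm (-(t • v)) := map_add_le_add _ _ _
        _ = pm (t • v + w) := by rw [map_neg_eq_map, hscale, add_zero]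
  have hX : ∀ t : ℝ, B (t • v + w) (t • v + w) = 1 := by
    intro t
    have h1 : Real.sqrt (B (t • v + w) (t • v + w)) = 1 := by
      rw [← hB, heq, hB, hww, Real.sqrt_one]
    rcases le_or_gt 0 (B (t • v + w) (t • v + w)) with hpos | hneg
    · have := Real.sq_sqrt hpos
      rw [h1] at this; simpa using this.symm
    · rw [Real.sqrt_eq_zero'.mpr hneg.le] at h1; norm_num at h1
  have hexp : ∀ t : ℝ, B (t • v + w) (t • v + w)
      = t^2 * B v v + 2 * t * B v w + 1 := by
    intro t
    simp only [map_add, map_smul, LinearMap.add_apply, LinearMap.smul_apply, smul_eq_mul, hww]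
    rw [hBs w v]; ring
  have h1 := hX 1; rw [hexp] at h1
  have h2 := hX (-1); rw [hexp] at h2
  nlinarith

lemma stmt19_cs (G : Finset ℕ) (c q : ℕ → ℝ) (hq : ∀ k, 0 ≤ q k) (M T : ℝ)
    (hM : 0 ≤ M) (hT : 0 ≤ T)
    (hc : ∑ k ∈ G, c k ^ 2 ≤ M ^ 2) (hqs : ∑ k ∈ G, q k ^ 2 ≤ T ^ 2) :
    ∑ k ∈ G, |c k| * q k ≤ M * T := by
  have h := Finset.sum_mul_sq_le_sq_mul_sq G (fun k => |c k|) q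
  have h2 : (∑ k ∈ G, |c k| * q k) ^ 2 ≤ (M * T) ^ 2 := by
    simp only [sq_abs] at h
    calc (∑ k ∈ G, |c k| * q k) ^ 2 ≤ (∑ k ∈ G, c k ^ 2) * ∑ k ∈ G, q k ^ 2 := h
      _ ≤ M ^ 2 * T ^ 2 := by
          apply mul_le_mul hc hqs (Finset.sum_nonneg fun k _ => sq_nonneg _)
            (sq_nonneg _)
      _ = (M * T) ^ 2 := by ring
  have hnn : 0 ≤ ∑ k ∈ G, |c k| * q k :=
    Finset.sum_nonneg fun k _ => mul_nonneg (abs_nonneg _) (hq k)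
  exact (pow_le_pow_iff_left₀ hnn (mul_nonneg hM hT) two_ne_zero).mp h2

lemma stmt19_expand1 {V : Type*} [AddCommGroup V] [Module ℝ V]
    (B : V →ₗ[ℝ] V →ₗ[ℝ] ℝ) (F : Finset ℕ) (a : ℕ → ℝ) (e : ℕ → V) (w : V) :
    B (∑ k ∈ F, a k • e k) w = ∑ k ∈ F, a k * B (e k) w := by
  simp [map_sum, LinearMap.sum_apply, map_smul, LinearMap.smul_apply, smul_eq_mul]

lemma stmt19_expand2 {V : Type*} [AddCommGroup V] [Module ℝ V]
    (B : V →ₗ[ℝ] V →ₗ[ℝ] ℝ) (F : Finset ℕ) (a : ℕ → ℝ) (e : ℕ → V) (w : V) :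
    B w (∑ k ∈ F, a k • e k) = ∑ k ∈ F, a k * B w (e k) := by
  simp [map_sum, map_smul, smul_eq_mul]

lemma stmt19_bessel {V : Type*} [AddCommGroup V] [Module ℝ V]
    (B : V →ₗ[ℝ] V →ₗ[ℝ] ℝ)
    (hBs : ∀ u v, B u v = B v u)
    (hpos : ∀ v, 0 ≤ B v v)
    (e : ℕ → V) (horth : ∀ i j, B (e i) (e j) = if i = j then (1:ℝ) else 0)
    (v : V) (F : Finset ℕ) :
    ∑ k ∈ F, (B v (e k)) ^ 2 ≤ B v v := by
  set P : V := ∑ k ∈ F, B v (e k) • e k with hP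
  have h0 : 0 ≤ B (v - P) (v - P) := hpos _
  have hPv : B P v = ∑ k ∈ F, (B v (e k)) ^ 2 := by
    rw [hP, stmt19_expand1]
    refine Finset.sum_congr rfl fun k _ => ?_
    rw [hBs (e k) v]; ring
  have hvP : B v P = ∑ k ∈ F, (B v (e k)) ^ 2 := by rw [hBs]; exact hPv
  have hPP : B P P = ∑ k ∈ F, (B v (e k)) ^ 2 := by
    rw [hP, stmt19_expand1]
    refine Finset.sum_congr rfl fun j hj => ?_
    rw [stmt19_expand2]
    rw [Finset.sum_eq_single j]
    · rw [horth]; simp; ring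
    · intro k hk hkj; rw [horth]; simp [Ne.symm hkj]
    · intro hjF; exact absurd hj hjF
  have hexp : B (v - P) (v - P) = B v v - ∑ k ∈ F, (B v (e k)) ^ 2 := by
    simp only [map_sub, LinearMap.sub_apply]
    rw [hPv, hvP, hPP]; ring
  linarith [h0, hexp ▸ h0]

lemma stmt19_qsum {V : Type*} [AddCommGroup V] [Module ℝ V]
    (q : Seminorm ℝ V) (F : Finset ℕ) (a : ℕ → ℝ) (e : ℕ → V) :
    q (∑ k ∈ F, a k • e k) ≤ ∑ k ∈ F, |a k| * q (e k) := by
  calc q (∑ k ∈ F, a k • e k) ≤ ∑ k ∈ F, q (a k • e k) :=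
        Finset.le_sum_of_subadditive q (map_zero q).le (map_add_le_add q) F _
    _ = ∑ k ∈ F, |a k| * q (e k) := by
        refine Finset.sum_congr rfl fun k _ => ?_
        rw [map_smul_eq_mul, Real.norm_eq_abs]

lemma stmt19_key {V : Type*} [AddCommGroup V] [Module ℝ V]
    (q pm : Seminorm ℝ V) (hqpm : ∀ v, q v ≤ pm v)
    (B : V →ₗ[ℝ] V →ₗ[ℝ] ℝ)
    (hBs : ∀ u v, B u v = B v u)
    (hB : ∀ v, pm v = Real.sqrt (B v v))
    (hpos : ∀ v, 0 ≤ B v v)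
    (e : ℕ → V) (horth : ∀ i j, B (e i) (e j) = if i = j then (1:ℝ) else 0)
    (htot : ∀ v : V, ∀ ε > (0:ℝ), ∃ (G : Finset ℕ) (d : ℕ → ℝ),
      pm (v - ∑ i ∈ G, d i • e i) < ε)
    (hsum : Summable fun k => (q (e k)) ^ 2)
    (F : Finset ℕ) (ε' : ℝ) (hε' : 0 ≤ ε')
    (htail : ∀ G : Finset ℕ, Disjoint G F → ∑ k ∈ G, (q (e k)) ^ 2 ≤ ε' ^ 2)
    (v : V) (C : ℝ) (hC : 0 ≤ C) (hvC : pm v ≤ C) :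
    q (v - ∑ k ∈ F, B v (e k) • e k) ≤ C * ε' := by
  have hsq : ∀ z : V, (pm z) ^ 2 = B z z := fun z => by
    rw [hB]; exact Real.sq_sqrt (hpos z)
  set A : ℝ := ∑' k, (q (e k)) ^ 2 with hA
  have hA0 : 0 ≤ A := tsum_nonneg fun k => sq_nonneg _
  have hsA : 0 ≤ Real.sqrt A := Real.sqrt_nonneg A
  refine le_of_forall_pos_le_add fun η hη => ?_
  have hδpos : 0 < η / (1 + Real.sqrt A) := by positivity
  set δ := η / (1 + Real.sqrt A) with hδ
  obtain ⟨G, d, hGd⟩ := htot v δ hδpos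
  set w : V := ∑ i ∈ G, d i • e i with hw
  set u : V := v - w with hu
  set F' : Finset ℕ := F ∪ G with hF'
  have hFF' : F ⊆ F' := Finset.subset_union_left
  have hGF' : G ⊆ F' := Finset.subset_union_right
  have hcw : ∀ k, B w (e k) = if k ∈ G then d k else 0 := by
    intro k
    rw [hw, stmt19_expand1]
    by_cases hk : k ∈ G
    · rw [Finset.sum_eq_single k]
      · rw [horth]; simp [hk]
      · intro i hi hik; rw [horth]; simp [hik]
      · intro h; exact absurd hk h
    · rw [if_neg hk]
      refine Finset.sum_eq_zero fun i hi => ?_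
      have : i ≠ k := fun h => hk (h ▸ hi)
      rw [horth]; simp [this]
  have hPw : ∑ k ∈ F', B w (e k) • e k = w := by
    rw [hw]
    calc ∑ k ∈ F', B w (e k) • e k
        = ∑ k ∈ F', (if k ∈ G then d k • e k else 0) := by
          refine Finset.sum_congr rfl fun k _ => ?_
          rw [hcw]
          split <;> simp
      _ = ∑ k ∈ F' ∩ G, d k • e k := Finset.sum_ite_mem _ _ _
      _ = ∑ k ∈ G, d k • e k := by rw [Finset.inter_eq_right.mpr hGF']
  have hBu : ∀ k, B u (e k) = B v (e k) - B w (e k) := by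
    intro k; rw [hu, map_sub, LinearMap.sub_apply]
  have h2 : ∑ k ∈ F' \ F, B v (e k) • e k + ∑ k ∈ F, B v (e k) • e k
      = ∑ k ∈ F', B v (e k) • e k := Finset.sum_sdiff hFF'
  have h1 : ∑ k ∈ F', B v (e k) • e k = ∑ k ∈ F', B u (e k) • e k + w := by
    rw [← hPw, ← Finset.sum_add_distrib]
    refine Finset.sum_congr rfl fun k _ => ?_
    rw [hBu, sub_smul]; abel
  have hsplit : v - ∑ k ∈ F, B v (e k) • e k
      = (u - ∑ k ∈ F', B u (e k) • e k) + ∑ k ∈ F' \ F, B v (e k) • e k := by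
    have h3 : ∑ k ∈ F, B v (e k) • e k
        = ∑ k ∈ F', B v (e k) • e k - ∑ k ∈ F' \ F, B v (e k) • e k := by
      rw [← h2]; abel
    rw [h3, h1, hu]; abel
  have hpmu : pm u ≤ δ := by rw [hu, hw]; exact hGd.le
  have hbessel_u : ∑ k ∈ F', (B u (e k)) ^ 2 ≤ (pm u) ^ 2 := by
    rw [hsq]; exact stmt19_bessel B hBs hpos e horth u F'
  have hsumF' : ∑ k ∈ F', (q (e k)) ^ 2 ≤ (Real.sqrt A) ^ 2 := by
    rw [Real.sq_sqrt hA0, hA]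
    exact Summable.sum_le_tsum F' (fun k _ => sq_nonneg _) hsum
  have ha : q (u - ∑ k ∈ F', B u (e k) • e k) ≤ η := by
    calc q (u - ∑ k ∈ F', B u (e k) • e k)
        ≤ q u + q (∑ k ∈ F', B u (e k) • e k) := map_sub_le_add _ _ _
      _ ≤ pm u + ∑ k ∈ F', |B u (e k)| * q (e k) := by
          gcongr
          · exact hqpm u
          · exact stmt19_qsum q F' _ e
      _ ≤ δ + pm u * Real.sqrt A := by
          gcongr
          exact stmt19_cs F' _ _ (fun k => apply_nonneg q _) _ _
            (apply_nonneg pm u) hsA hbessel_u hsumF'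
      _ ≤ δ + δ * Real.sqrt A := by gcongr
      _ = η := by
          rw [hδ]; field_simp
  have hbessel_v : ∑ k ∈ F' \ F, (B v (e k)) ^ 2 ≤ C ^ 2 := by
    calc ∑ k ∈ F' \ F, (B v (e k)) ^ 2 ≤ B v v := stmt19_bessel B hBs hpos e horth v _
      _ = (pm v) ^ 2 := (hsq v).symm
      _ ≤ C ^ 2 := by gcongr
  have hb : q (∑ k ∈ F' \ F, B v (e k) • e k) ≤ C * ε' := by
    calc q (∑ k ∈ F' \ F, B v (e k) • e k)
        ≤ ∑ k ∈ F' \ F, |B v (e k)| * q (e k) := stmt19_qsum q _ _ e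
      _ ≤ C * ε' := stmt19_cs _ _ _ (fun k => apply_nonneg q _) _ _ hC hε'
          hbessel_v (htail _ (Finset.sdiff_disjoint))
  calc q (v - ∑ k ∈ F, B v (e k) • e k)
      ≤ q (u - ∑ k ∈ F', B u (e k) • e k) + q (∑ k ∈ F' \ F, B v (e k) • e k) := by
        rw [hsplit]; exact map_add_le_add _ _ _
    _ ≤ η + (C * ε') := add_le_add ha hb
    _ = C * ε' + η := add_comm _ _

/-- If `V` is a nuclear space — a complete countably-Hilbert space (the increasing norms
`p n` come from inner products `Bf n`) such that for every `n` there is `m ≥ n` for which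
the inclusion `V_m ↪ V_n` is Hilbert–Schmidt (there is an orthonormal basis `e` of `V_m`,
i.e. an orthonormal total family in the `m`-th inner product, with `Σ_k ‖e k‖_n² < ∞`) —
then every bounded subset of `V` is relatively compact; that is, `V` is perfect. -/
theorem stmt19 {V : Type*} [AddCommGroup V] [Module ℝ V] [UniformSpace V]
    [IsUniformAddGroup V] [CompleteSpace V]
    (p : SeminormFamily ℝ V ℕ) (hp : WithSeminorms p) (hmono : Monotone p)
    (Bf : ℕ → (V →ₗ[ℝ] V →ₗ[ℝ] ℝ))
    (hBsymm : ∀ n u v, Bf n u v = Bf n v u)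
    (hBp : ∀ n v, p n v = Real.sqrt (Bf n v v))
    (hnuclear : ∀ n : ℕ, ∃ m ≥ n, ∃ e : ℕ → V,
      (∀ i j, Bf m (e i) (e j) = if i = j then (1 : ℝ) else 0) ∧
      (∀ v : V, ∀ ε > (0 : ℝ), ∃ (s : Finset ℕ) (c : ℕ → ℝ),
        p m (v - ∑ i ∈ s, c i • e i) < ε) ∧
      Summable (fun k => (p n (e k)) ^ 2)) :
    ∀ s : Set V, Bornology.IsVonNBounded ℝ s → IsCompact (closure s) := by
  intro s hs
  haveI : ContinuousSMul ℝ V := hp.continuousSMul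
  have hb : ∀ k : ℕ, ∃ r > 0, ∀ x ∈ s, p k x < r :=
    hp.isVonNBounded_iff_seminorm_bounded.mp hs
  suffices hTB : TotallyBounded s by
    exact TotallyBounded.isCompact_of_isClosed hTB.closure isClosed_closure
  rw [totallyBounded_iff_subset_finite_iUnion_nhds_zero]
  intro U hU
  obtain ⟨W, hW, hWU⟩ := hp.hasBasis.mem_iff.mp hU
  obtain ⟨F0, r, hr, hWeq⟩ := p.basisSets_iff.mp hW
  set N : ℕ := F0.sup id with hN
  have hsupN : ∀ x, (F0.sup p) x ≤ p N x := by
    intro x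
    have h : F0.sup p ≤ p N :=
      Finset.sup_le fun i hi => hmono (Finset.le_sup (f := id) hi)
    exact h x
  obtain ⟨m, hmn, e, horth, htot, hsum⟩ := hnuclear N
  have hpos : ∀ v, 0 ≤ Bf m v v :=
    stmt19_pos (p m) (Bf m) (hBsymm m) (hBp m) (e 0) (by rw [horth]; simp)
  have hsq : ∀ z : V, (p m z) ^ 2 = Bf m z z := fun z => by
    rw [hBp]; exact Real.sq_sqrt (hpos z)
  obtain ⟨C, hC0, hCs⟩ := hb m
  have hqpm : ∀ v, p N v ≤ p m v := fun v => hmono hmn v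
  have hε' : (0:ℝ) < r / (4 * C) := by positivity
  obtain ⟨F, hF⟩ := hsum.vanishing
    (show Set.Iio ((r / (4 * C)) ^ 2) ∈ 𝓝 (0:ℝ) from Iio_mem_nhds (by positivity))
  have htail : ∀ G : Finset ℕ, Disjoint G F →
      ∑ k ∈ G, (p N (e k)) ^ 2 ≤ (r / (4 * C)) ^ 2 := fun G hG => (hF G hG).le
  have key : ∀ v ∈ s, p N (v - ∑ k ∈ F, Bf m v (e k) • e k) ≤ r / 4 := by
    intro v hv
    have h := stmt19_key (p N) (p m) hqpm (Bf m) (hBsymm m) (hBp m) hpos e horth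
      (fun v ε hε => htot v ε hε) hsum F _ hε'.le htail v C hC0.le (hCs v hv).le
    calc p N (v - ∑ k ∈ F, Bf m v (e k) • e k) ≤ C * (r / (4 * C)) := h
      _ = r / 4 := by field_simp
  -- compact net
  have hKcont : Continuous fun a : ℕ → ℝ => ∑ k ∈ F, a k • e k :=
    continuous_finset_sum _ fun k _ => (continuous_apply k).smul continuous_const
  have hKc : IsCompact ((fun a : ℕ → ℝ => ∑ k ∈ F, a k • e k) ''
      (Set.pi Set.univ fun _ : ℕ => Set.Icc (-C) C)) :=
    (isCompact_univ_pi fun _ => isCompact_Icc).image hKcont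
  have hball : {x : V | p N x < r / 2} ∈ 𝓝 (0 : V) := by
    refine hp.hasBasis.mem_iff.mpr ⟨(p N).ball 0 (r / 2), ?_, ?_⟩
    · have := p.basisSets_mem {N} (by positivity : (0:ℝ) < r / 2)
      rwa [Finset.sup_singleton] at this
    · intro x hx
      simp only [id_eq] at hx
      exact (p N).mem_ball_zero.mp hx
  have hd : {q : V × V | p N (q.1 - q.2) < r / 2} ∈ 𝓤 V := by
    rw [uniformity_eq_comap_nhds_zero V]
    refine Filter.mem_comap.mpr ⟨{x : V | p N x < r / 2}, hball, ?_⟩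
    intro q hq
    simp only [Set.mem_preimage, Set.mem_setOf_eq] at hq ⊢
    rwa [map_sub_rev] at hq
  obtain ⟨t, htf, htK⟩ := hKc.totallyBounded _ hd
  refine ⟨t, htf, fun v hv => ?_⟩
  have hcoef : ∀ k, |Bf m v (e k)| ≤ C := by
    intro k
    have h1 : (Bf m v (e k)) ^ 2 ≤ Bf m v v := by
      have := stmt19_bessel (Bf m) (hBsymm m) hpos e horth v {k}
      simpa using this
    have h2 : (Bf m v (e k)) ^ 2 ≤ C ^ 2 := by
      refine h1.trans ?_
      rw [← hsq]
      have := (hCs v hv).le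
      gcongr
    calc |Bf m v (e k)| = Real.sqrt ((Bf m v (e k)) ^ 2) := (Real.sqrt_sq_eq_abs _).symm
      _ ≤ Real.sqrt (C ^ 2) := Real.sqrt_le_sqrt h2
      _ = C := Real.sqrt_sq hC0.le
  have hmemK : (∑ k ∈ F, Bf m v (e k) • e k) ∈
      ((fun a : ℕ → ℝ => ∑ k ∈ F, a k • e k) ''
        (Set.pi Set.univ fun _ : ℕ => Set.Icc (-C) C)) := by
    refine ⟨fun k => Bf m v (e k), fun k _ => ?_, rfl⟩
    exact Set.mem_Icc.mpr (abs_le.mp (hcoef k))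
  obtain ⟨y, hyt, hy⟩ := Set.mem_iUnion₂.mp (htK hmemK)
  have hy2 : p N ((∑ k ∈ F, Bf m v (e k) • e k) - y) < r / 2 := hy
  have hvy : p N (v - y) < r := by
    calc p N (v - y)
        ≤ p N (v - ∑ k ∈ F, Bf m v (e k) • e k)
          + p N ((∑ k ∈ F, Bf m v (e k) • e k) - y) := by
          have : v - y = (v - ∑ k ∈ F, Bf m v (e k) • e k)
              + ((∑ k ∈ F, Bf m v (e k) • e k) - y) := by abel
          rw [this]; exact map_add_le_add _ _ _
      _ < r / 4 + r / 2 := by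
          have := key v hv
          exact add_lt_add_of_le_of_lt this hy2
      _ < r := by linarith
  refine Set.mem_iUnion₂.mpr ⟨y, hyt, ?_⟩
  rw [Set.mem_vadd_set_iff_neg_vadd_mem]
  apply hWU
  simp only [id_eq, hWeq]
  rw [Seminorm.mem_ball_zero]
  have hvadd : (-y) +ᵥ v = v - y := by rw [vadd_eq_add, neg_add_eq_sub]
  rw [hvadd]
  exact lt_of_le_of_lt (hsupN _) hvy
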